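/- Let ν be a normal weight on [0,1) with exponents a ≤ b. Then for all r with 1/2 ≤ r < 1, the sum ∑_{j=0}^∞ r^{2^j}/ν(1-2^{-j}) ≤ C/ν(r), where C depends only on ν. -/

import Mathlib

open MeasureTheory Set Filter

/-- `g` is almost decreasing on `s`. -/
def AlmostDecreasingOn (g : ℝ → ℝ) (s : Set ℝ) : Prop :=
  ∃ C > 0, ∀ x ∈ s, ∀ y ∈ s, x < y → g y ≤ C * g x

/-- `g` is almost increasing on `s`. -/
def AlmostIncreasingOn (g : ℝ → ℝ) (s : Set ℝ) : Prop :=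
  ∃ C > 0, ∀ x ∈ s, ∀ y ∈ s, x < y → g x ≤ C * g y

/-- `ν` is a normal weight on `[0,1)` with exponents `a ≤ b`. -/
def IsNormal (ν : ℝ → ℝ) (a b : ℝ) : Prop :=
  0 < a ∧ a ≤ b ∧ (∀ s ∈ Ico (0:ℝ) 1, 0 < ν s) ∧ ContinuousOn ν (Ico 0 1) ∧
  AlmostDecreasingOn (fun s => ν s / (1 - s ^ 2) ^ a) (Ico 0 1) ∧
  AlmostIncreasingOn (fun s => ν s / (1 - s ^ 2) ^ b) (Ico 0 1)

/-- Membership in the normal-weight Bloch space `B_ν`. -/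
def MemBloch (ν : ℝ → ℝ) (f : ℂ → ℂ) : Prop :=
  DifferentiableOn ℂ f (Metric.ball 0 1) ∧
  BddAbove (Set.range fun z : Metric.ball (0:ℂ) 1 => ν ‖(z : ℂ)‖ * ‖deriv f z‖)

/-- The Bloch norm `|f(0)| + sup ν(|z|)|f'(z)|`. -/
noncomputable def blochNorm (ν : ℝ → ℝ) (f : ℂ → ℂ) : ℝ :=
  ‖f 0‖ + ⨆ z : Metric.ball (0:ℂ) 1, ν ‖(z : ℂ)‖ * ‖deriv f z‖

/-- `ω̃(t) = ∫_0^t ds/ω(s)`. -/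
noncomputable def tildeW (ω : ℝ → ℝ) (t : ℝ) : ℝ := ∫ s in (0:ℝ)..t, 1 / ω s

/-- The generalized integral type Hilbert operator `I_{μ,α+1}`. -/
noncomputable def intHilbert (μ : Measure ℝ) (α : ℝ) (f : ℂ → ℂ) (z : ℂ) : ℂ :=
  ∫ t in Ico (0:ℝ) 1, f (t : ℂ) / (1 - (t : ℂ) * z) ^ ((α : ℂ) + 1) ∂μ

/-- The sublinear generalized integral type Hilbert operator. -/
noncomputable def tildeIntHilbert (μ : Measure ℝ) (α : ℝ) (f : ℂ → ℂ) (z : ℂ) : ℂ :=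
  ∫ t in Ico (0:ℝ) 1, (‖f (t : ℂ)‖ : ℂ) / (1 - (t : ℂ) * z) ^ ((α : ℂ) + 1) ∂μ

/-- Boundedness of an operator from `B_{ν₁}` to `B_{ν₂}`. -/
def IsBddOp (ν₁ ν₂ : ℝ → ℝ) (T : (ℂ → ℂ) → ℂ → ℂ) : Prop :=
  ∃ C > 0, ∀ f, MemBloch ν₁ f → MemBloch ν₂ (T f) ∧ blochNorm ν₂ (T f) ≤ C * blochNorm ν₁ f

/-- Compactness of an operator from `B_{ν₁}` to `B_{ν₂}` (sequential characterization). -/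
def IsCompactOp (ν₁ ν₂ : ℝ → ℝ) (T : (ℂ → ℂ) → ℂ → ℂ) : Prop :=
  IsBddOp ν₁ ν₂ T ∧
  ∀ (h : ℕ → ℂ → ℂ) (M : ℝ), (∀ k, MemBloch ν₁ (h k) ∧ blochNorm ν₁ (h k) ≤ M) →
    TendstoLocallyUniformlyOn (fun k z => h k z) (fun _ => 0) atTop (Metric.ball (0:ℂ) 1) →
    Tendsto (fun k => blochNorm ν₂ (T (h k))) atTop (nhds 0)

lemma rpow_pow_comm' (x c : ℝ) (hx : 0 ≤ x) (i : ℕ) : (x ^ i) ^ c = (x ^ c) ^ i := by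
  rw [← Real.rpow_natCast x i, ← Real.rpow_natCast (x ^ c) i, ← Real.rpow_mul hx,
    ← Real.rpow_mul hx, mul_comm]

lemma pow_le_fact_mul_exp (x : ℝ) (hx : 0 ≤ x) (n : ℕ) : x ^ n ≤ n.factorial * Real.exp x := by
  have h := Real.sum_le_exp_of_nonneg hx (n+1)
  have h2 : x ^ n / n.factorial ≤ Real.exp x := by
    refine le_trans ?_ h
    refine Finset.single_le_sum (f := fun i => x ^ i / i.factorial) ?_
      (Finset.self_mem_range_succ n)
    intro i _; positivity
  rw [div_le_iff₀ (by positivity)] at h2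
  linarith [h2]

lemma exp_neg_le_fact_div (x : ℝ) (hx : 0 < x) (n : ℕ) :
    Real.exp (-x) ≤ (n.factorial:ℝ) / x^n := by
  have hfact := pow_le_fact_mul_exp x hx.le n
  have hex := Real.exp_pos x
  have hxn : (0:ℝ) < x^n := by positivity
  rw [Real.exp_neg, ← one_div, div_le_div_iff₀ hex hxn]
  nlinarith

lemma exists_dyadic (x : ℝ) (hx : 0 < x) (hx2 : x ≤ 1/2) :
    ∃ m : ℕ, (1/2:ℝ)^(m+1) < x ∧ x ≤ (1/2:ℝ)^m := by
  have hex : ∃ n : ℕ, (1/2:ℝ)^n < x := exists_pow_lt_of_lt_one hx (by norm_num)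
  classical
  set n₀ := Nat.find hex with hn₀
  have hspec : (1/2:ℝ)^n₀ < x := Nat.find_spec hex
  have hn₀pos : n₀ ≠ 0 := by
    intro h
    rw [h] at hspec
    simp at hspec
    nlinarith
  obtain ⟨m, hm⟩ := Nat.exists_eq_succ_of_ne_zero hn₀pos
  refine ⟨m, by rw [show m + 1 = n₀ from hm.symm]; exact hspec, ?_⟩
  have := Nat.find_min hex (m := m) (by omega)
  linarith [not_lt.mp this]

set_option maxHeartbeats 1000000 in
theorem stmt4 (ν : ℝ → ℝ) (a b : ℝ) (hν : IsNormal ν a b) :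
    ∃ C > 0, ∀ r : ℝ, 1 / 2 ≤ r → r < 1 →
      (∑' j : ℕ, r ^ (2 ^ j) / ν (1 - (2:ℝ) ^ (-(j:ℝ)))) ≤ C / ν r := by
  obtain ⟨ha, hab, hpos, -, ⟨C₁, hC₁pos, hC₁⟩, ⟨C₂, hC₂pos, hC₂⟩⟩ := hν
  have hb : 0 < b := lt_of_lt_of_le ha hab
  obtain ⟨n, hbn1⟩ : ∃ n : ℕ, b + 1 ≤ (n:ℝ) := by
    refine ⟨⌈b⌉₊ + 2, ?_⟩
    have h := Nat.le_ceil b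
    push_cast
    linarith
  set K₁ := max C₁ 1 with hK₁def
  set K₂ := max C₂ 1 with hK₂def
  have hK₁pos : 0 < K₁ := lt_of_lt_of_le one_pos (le_max_right _ _)
  have hK₂pos : 0 < K₂ := lt_of_lt_of_le one_pos (le_max_right _ _)
  have hgnonneg : ∀ c : ℝ, ∀ x ∈ Ico (0:ℝ) 1, 0 ≤ ν x / (1 - x^2)^c := by
    intro c x hx
    have h1 : (0:ℝ) ≤ 1 - x^2 := by
      have h2 := hx.1
      have h3 := hx.2
      nlinarith
    exact div_nonneg (hpos x hx).le (Real.rpow_nonneg h1 c)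
  have hK₁' : ∀ x ∈ Ico (0:ℝ) 1, ∀ y ∈ Ico (0:ℝ) 1, x ≤ y →
      ν y / (1 - y^2)^a ≤ K₁ * (ν x / (1 - x^2)^a) := by
    intro x hx y hy hxy
    rcases eq_or_lt_of_le hxy with rfl | hlt
    · exact le_mul_of_one_le_left (hgnonneg a x hx) (le_max_right _ _)
    · calc ν y / (1-y^2)^a ≤ C₁ * (ν x / (1-x^2)^a) := hC₁ x hx y hy hlt
        _ ≤ K₁ * (ν x / (1-x^2)^a) :=
            mul_le_mul_of_nonneg_right (le_max_left _ _) (hgnonneg a x hx)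
  have hK₂' : ∀ x ∈ Ico (0:ℝ) 1, ∀ y ∈ Ico (0:ℝ) 1, x ≤ y →
      ν x / (1 - x^2)^b ≤ K₂ * (ν y / (1 - y^2)^b) := by
    intro x hx y hy hxy
    rcases eq_or_lt_of_le hxy with rfl | hlt
    · exact le_mul_of_one_le_left (hgnonneg b x hx) (le_max_right _ _)
    · calc ν x / (1-x^2)^b ≤ C₂ * (ν y / (1-y^2)^b) := hC₂ x hx y hy hlt
        _ ≤ K₂ * (ν y / (1-y^2)^b) :=
            mul_le_mul_of_nonneg_right (le_max_left _ _) (hgnonneg b y hy)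
  have hhalfa : (1/2:ℝ)^a < 1 := Real.rpow_lt_one (by norm_num) (by norm_num) ha
  have hhalfa0 : (0:ℝ) ≤ (1/2:ℝ)^a := Real.rpow_nonneg (by norm_num) a
  have h2a : (0:ℝ) < (2:ℝ)^a := Real.rpow_pos_of_pos (by norm_num) a
  have h2b : (0:ℝ) < (2:ℝ)^b := Real.rpow_pos_of_pos (by norm_num) b
  have hfactpos : (0:ℝ) < (n.factorial : ℝ) := by positivity
  refine ⟨K₁ * (2:ℝ)^a * (1 - (1/2:ℝ)^a)⁻¹ + K₂ * (2:ℝ)^b * (2:ℝ)^b * (n.factorial : ℝ) * 2,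
    ?_, ?_⟩
  · have h1 : 0 < (1 - (1/2:ℝ)^a)⁻¹ := inv_pos.mpr (by linarith)
    have := mul_pos (mul_pos hK₁pos h2a) h1
    have := mul_pos (mul_pos (mul_pos (mul_pos hK₂pos h2b) h2b) hfactpos) (show (0:ℝ) < 2 by norm_num)
    linarith
  intro r hr2 hr1
  have hr0 : (0:ℝ) ≤ r := by linarith
  have hrIco : r ∈ Ico (0:ℝ) 1 := ⟨hr0, hr1⟩
  have hνr : 0 < ν r := hpos r hrIco
  have h1r0 : 0 < 1 - r := by linarith
  obtain ⟨m, hm1, hm2⟩ := exists_dyadic (1 - r) h1r0 (by linarith)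
  have hrw : ∀ j : ℕ, (2:ℝ) ^ (-(j:ℝ)) = (1/2:ℝ)^j := by
    intro j
    rw [one_div, inv_pow, Real.rpow_neg (by norm_num : (0:ℝ) ≤ 2), Real.rpow_natCast]
  set g : ℕ → ℝ := fun j => r ^ (2^j) / ν (1 - (1/2:ℝ)^j) with hg
  have htsum_eq : (∑' j : ℕ, r ^ (2 ^ j) / ν (1 - (2:ℝ) ^ (-(j:ℝ)))) = ∑' j, g j :=
    tsum_congr fun j => by rw [hrw j]
  have htj : ∀ j : ℕ, (1 - (1/2:ℝ)^j) ∈ Ico (0:ℝ) 1 := by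
    intro j
    constructor
    · have : (1/2:ℝ)^j ≤ 1 := pow_le_one₀ (by norm_num) (by norm_num)
      linarith
    · have : (0:ℝ) < (1/2:ℝ)^j := by positivity
      linarith
  have hνt : ∀ j : ℕ, 0 < ν (1 - (1/2:ℝ)^j) := fun j => hpos _ (htj j)
  have hgnn : ∀ j, 0 ≤ g j := fun j => div_nonneg (by positivity) (hνt j).le
  -- Bound for j ≤ m
  have hA : ∀ j ≤ m, ν r * g j ≤ K₁ * (2:ℝ)^a * ((1/2:ℝ)^a)^(m - j) := by
    intro j hj
    set x := 1 - (1/2:ℝ)^j with hxdef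
    have hx : x ∈ Ico (0:ℝ) 1 := htj j
    have hνx : 0 < ν x := hνt j
    have hgj : g j = r ^ (2^j) / ν x := rfl
    have hxr : x ≤ r := by
      have h1 : (1/2:ℝ)^m ≤ (1/2:ℝ)^j := pow_le_pow_of_le_one (by norm_num) (by norm_num) hj
      rw [hxdef]
      linarith [hm2]
    have hx2 : x^2 < 1 := by nlinarith [hx.1, hx.2]
    have hr2' : r^2 < 1 := by nlinarith
    have hQ : (0:ℝ) < (1 - x^2)^a := Real.rpow_pos_of_pos (by linarith) a
    have hP : (0:ℝ) < (1 - r^2)^a := Real.rpow_pos_of_pos (by linarith) a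
    have key := hK₁' x hx r hrIco hxr
    have hcross : ν r * (1 - x^2)^a ≤ K₁ * ν x * (1 - r^2)^a := by
      rw [← mul_div_assoc] at key
      exact (div_le_div_iff₀ hP hQ).mp key
    have e1 : (1 - r^2) ≤ 2 * (1/2:ℝ)^m := by nlinarith [hm2, sq_nonneg (1-r)]
    have e1' : (1 - r^2)^a ≤ (2 * (1/2:ℝ)^m)^a :=
      Real.rpow_le_rpow (by linarith) e1 ha.le
    have e2 : ((1/2:ℝ)^j) ≤ 1 - x^2 := by
      rw [hxdef]
      nlinarith [pow_pos (show (0:ℝ) < 1/2 by norm_num) j,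
        pow_le_one₀ (show (0:ℝ) ≤ 1/2 by norm_num) (show (1/2:ℝ) ≤ 1 by norm_num) (n := j)]
    have e2' : ((1/2:ℝ)^j)^a ≤ (1 - x^2)^a := Real.rpow_le_rpow (by positivity) e2 ha.le
    have e3 : (2 * (1/2:ℝ)^m)^a = (2:ℝ)^a * ((1/2:ℝ)^j)^a * ((1/2:ℝ)^a)^(m - j) := by
      have hsplit : 2 * (1/2:ℝ)^m = 2 * ((1/2:ℝ)^j * (1/2:ℝ)^(m - j)) := by
        rw [← pow_add, Nat.add_sub_cancel' hj]
      rw [hsplit, Real.mul_rpow (by norm_num) (by positivity),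
        Real.mul_rpow (by positivity) (by positivity),
        rpow_pow_comm' (1/2) a (by norm_num) (m - j), mul_assoc]
    have hchain : ν r * ((1/2:ℝ)^j)^a
        ≤ (K₁ * ν x * ((2:ℝ)^a * ((1/2:ℝ)^a)^(m - j))) * ((1/2:ℝ)^j)^a := by
      calc ν r * ((1/2:ℝ)^j)^a ≤ ν r * (1 - x^2)^a := mul_le_mul_of_nonneg_left e2' hνr.le
        _ ≤ K₁ * ν x * (1 - r^2)^a := hcross
        _ ≤ K₁ * ν x * (2 * (1/2:ℝ)^m)^a :=
            mul_le_mul_of_nonneg_left e1' (mul_nonneg hK₁pos.le hνx.le)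
        _ = _ := by rw [e3]; ring
    have hfinal : ν r ≤ K₁ * ν x * ((2:ℝ)^a * ((1/2:ℝ)^a)^(m - j)) :=
      le_of_mul_le_mul_right hchain (Real.rpow_pos_of_pos (by positivity) a)
    have hr1pow : r ^ (2^j) ≤ 1 := pow_le_one₀ hr0 hr1.le
    have hdiv : ν r / ν x ≤ K₁ * (2:ℝ)^a * ((1/2:ℝ)^a)^(m - j) := by
      rw [div_le_iff₀ hνx]
      calc ν r ≤ K₁ * ν x * ((2:ℝ)^a * ((1/2:ℝ)^a)^(m - j)) := hfinal
        _ = K₁ * (2:ℝ)^a * ((1/2:ℝ)^a)^(m - j) * ν x := by ring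
    have heq : ν r * g j = r ^ (2^j) * (ν r / ν x) := by rw [hgj]; ring
    rw [heq]
    calc r ^ (2^j) * (ν r / ν x) ≤ 1 * (K₁ * (2:ℝ)^a * ((1/2:ℝ)^a)^(m - j)) :=
        mul_le_mul hr1pow hdiv (div_nonneg hνr.le hνx.le) one_pos.le
      _ = _ := one_mul _
  -- Bound for j = k + (m+1)
  have hB : ∀ k : ℕ, ν r * g (k + (m+1))
      ≤ K₂ * (2:ℝ)^b * (2:ℝ)^b * (n.factorial : ℝ) * (1/2:ℝ)^k := by
    intro k
    set j := k + (m+1) with hjdef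
    set y := 1 - (1/2:ℝ)^j with hydef
    have hy : y ∈ Ico (0:ℝ) 1 := htj j
    have hνy : 0 < ν y := hνt j
    have hgj : g j = r ^ (2^j) / ν y := rfl
    have hry : r ≤ y := by
      have h1 : (1/2:ℝ)^j ≤ (1/2:ℝ)^(m+1) :=
        pow_le_pow_of_le_one (by norm_num) (by norm_num) (by omega)
      rw [hydef]
      linarith [hm1]
    have hy2 : y^2 < 1 := by nlinarith [hy.1, hy.2]
    have hr2' : r^2 < 1 := by nlinarith
    have hQ : (0:ℝ) < (1 - y^2)^b := Real.rpow_pos_of_pos (by linarith) b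
    have hP : (0:ℝ) < (1 - r^2)^b := Real.rpow_pos_of_pos (by linarith) b
    have key := hK₂' r hrIco y hy hry
    have hcross : ν r * (1 - y^2)^b ≤ K₂ * ν y * (1 - r^2)^b := by
      rw [← mul_div_assoc] at key
      exact (div_le_div_iff₀ hP hQ).mp key
    have e1 : (1 - r^2) ≤ 2 * (1/2:ℝ)^m := by nlinarith [hm2, sq_nonneg (1-r)]
    have e1' : (1 - r^2)^b ≤ (2 * (1/2:ℝ)^m)^b :=
      Real.rpow_le_rpow (by linarith) e1 hb.le
    have e2 : ((1/2:ℝ)^j) ≤ 1 - y^2 := by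
      rw [hydef]
      nlinarith [pow_pos (show (0:ℝ) < 1/2 by norm_num) j,
        pow_le_one₀ (show (0:ℝ) ≤ 1/2 by norm_num) (show (1/2:ℝ) ≤ 1 by norm_num) (n := j)]
    have e2' : ((1/2:ℝ)^j)^b ≤ (1 - y^2)^b := Real.rpow_le_rpow (by positivity) e2 hb.le
    have e3 : (2 * (1/2:ℝ)^m)^b = ((2:ℝ)^b)^(k+2) * ((1/2:ℝ)^j)^b := by
      have hsplit : 2 * (1/2:ℝ)^m = (2:ℝ)^(k+2) * (1/2:ℝ)^j := by
        rw [hjdef]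
        simp only [one_div, inv_pow]
        field_simp
        ring
      rw [hsplit, Real.mul_rpow (by positivity) (by positivity),
        rpow_pow_comm' 2 b (by norm_num) (k+2)]
    have hchain : ν r * ((1/2:ℝ)^j)^b
        ≤ (K₂ * ν y * ((2:ℝ)^b)^(k+2)) * ((1/2:ℝ)^j)^b := by
      calc ν r * ((1/2:ℝ)^j)^b ≤ ν r * (1 - y^2)^b := mul_le_mul_of_nonneg_left e2' hνr.le
        _ ≤ K₂ * ν y * (1 - r^2)^b := hcross
        _ ≤ K₂ * ν y * (2 * (1/2:ℝ)^m)^b :=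
            mul_le_mul_of_nonneg_left e1' (mul_nonneg hK₂pos.le hνy.le)
        _ = _ := by rw [e3]; ring
    have hfinal : ν r ≤ K₂ * ν y * ((2:ℝ)^b)^(k+2) :=
      le_of_mul_le_mul_right hchain (Real.rpow_pos_of_pos (by positivity) b)
    have hdiv : ν r / ν y ≤ K₂ * ((2:ℝ)^b)^(k+2) := by
      rw [div_le_iff₀ hνy]
      calc ν r ≤ K₂ * ν y * ((2:ℝ)^b)^(k+2) := hfinal
        _ = K₂ * ((2:ℝ)^b)^(k+2) * ν y := by ring
    have hrexp : r ^ (2^j) ≤ Real.exp (-(2:ℝ)^k) := by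
      have h1 : r ≤ Real.exp (-(1-r)) := by
        have := Real.add_one_le_exp (-(1-r))
        linarith
      have h2 : r ^ (2^j) ≤ (Real.exp (-(1-r)))^(2^j) := pow_le_pow_left₀ hr0 h1 _
      rw [← Real.exp_nat_mul] at h2
      refine h2.trans (Real.exp_le_exp.mpr ?_)
      have hcast : ((2^j : ℕ) : ℝ) = (2:ℝ)^j := by push_cast; ring
      have h4 : (2:ℝ)^j * (1/2:ℝ)^(m+1) = (2:ℝ)^k := by
        rw [hjdef]
        simp only [one_div, inv_pow]
        field_simp
        ring
      have h5 : (2:ℝ)^j * (1/2:ℝ)^(m+1) ≤ (2:ℝ)^j * (1-r) :=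
        mul_le_mul_of_nonneg_left hm1.le (by positivity)
      rw [h4] at h5
      rw [hcast]
      nlinarith
    have hexpneg : Real.exp (-(2:ℝ)^k) ≤ (n.factorial:ℝ) / ((2:ℝ)^k)^n :=
      exp_neg_le_fact_div ((2:ℝ)^k) (by positivity) n
    have hkey2 : ((2:ℝ)^b)^k / ((2:ℝ)^k)^n ≤ (1/2:ℝ)^k := by
      have h1 : ((2:ℝ)^b)^k = ((2:ℝ)^k)^b := (rpow_pow_comm' 2 b (by norm_num) k).symm
      have h2 : ((2:ℝ)^k : ℝ)^n = ((2:ℝ)^k)^(n:ℝ) := (Real.rpow_natCast _ n).symm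
      rw [h1, h2, ← Real.rpow_sub (by positivity)]
      have h3 : ((2:ℝ)^k)^(b - (n:ℝ)) ≤ ((2:ℝ)^k)^(-(1:ℝ)) :=
        Real.rpow_le_rpow_of_exponent_le (one_le_pow₀ (by norm_num)) (by linarith)
      calc ((2:ℝ)^k)^(b - (n:ℝ)) ≤ ((2:ℝ)^k)^(-(1:ℝ)) := h3
        _ = (1/2:ℝ)^k := by
            rw [Real.rpow_neg_one, one_div, inv_pow]
    have heq : ν r * g j = r ^ (2^j) * (ν r / ν y) := by rw [hgj]; ring
    rw [heq]
    calc r ^ (2^j) * (ν r / ν y)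
        ≤ Real.exp (-(2:ℝ)^k) * (K₂ * ((2:ℝ)^b)^(k+2)) :=
          mul_le_mul hrexp hdiv (div_nonneg hνr.le hνy.le) (Real.exp_pos _).le
      _ ≤ ((n.factorial:ℝ) / ((2:ℝ)^k)^n) * (K₂ * ((2:ℝ)^b)^(k+2)) :=
          mul_le_mul_of_nonneg_right hexpneg
            (mul_nonneg hK₂pos.le (by positivity))
      _ = K₂ * (2:ℝ)^b * (2:ℝ)^b * (n.factorial:ℝ) * (((2:ℝ)^b)^k / ((2:ℝ)^k)^n) := by
          ring
      _ ≤ K₂ * (2:ℝ)^b * (2:ℝ)^b * (n.factorial:ℝ) * (1/2:ℝ)^k :=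
          mul_le_mul_of_nonneg_left hkey2 (by positivity)
  set D := K₂ * (2:ℝ)^b * (2:ℝ)^b * (n.factorial:ℝ) with hD
  have hDpos : 0 < D :=
    mul_pos (mul_pos (mul_pos hK₂pos h2b) h2b) hfactpos
  have hsum_tail : Summable (fun k => g (k + (m+1))) := by
    apply Summable.of_nonneg_of_le (fun k => hgnn _) (fun k => ?_)
      ((summable_geometric_of_lt_one (by norm_num) (by norm_num : (1/2:ℝ) < 1)).mul_left
        (D / ν r))
    rw [div_mul_eq_mul_div, le_div_iff₀ hνr]
    calc g (k+(m+1)) * ν r = ν r * g (k+(m+1)) := by ring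
      _ ≤ D * (1/2:ℝ)^k := hB k
  have hsum : Summable g := (summable_nat_add_iff (m+1)).mp hsum_tail
  rw [htsum_eq, le_div_iff₀ hνr, ← Summable.sum_add_tsum_nat_add (m+1) hsum, add_mul]
  have hpart1 : (∑ i ∈ Finset.range (m+1), g i) * ν r
      ≤ K₁ * (2:ℝ)^a * (1 - (1/2:ℝ)^a)⁻¹ := by
    rw [Finset.sum_mul]
    calc ∑ i ∈ Finset.range (m+1), g i * ν r
        ≤ ∑ i ∈ Finset.range (m+1), K₁ * (2:ℝ)^a * ((1/2:ℝ)^a)^(m - i) := by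
          apply Finset.sum_le_sum
          intro i hi
          have hi' : i ≤ m := Nat.lt_succ_iff.mp (Finset.mem_range.mp hi)
          calc g i * ν r = ν r * g i := by ring
            _ ≤ _ := hA i hi'
      _ = K₁ * (2:ℝ)^a * ∑ i ∈ Finset.range (m+1), ((1/2:ℝ)^a)^(m - i) := by
          rw [← Finset.mul_sum]
      _ ≤ K₁ * (2:ℝ)^a * (1 - (1/2:ℝ)^a)⁻¹ := by
          apply mul_le_mul_of_nonneg_left ?_ (mul_nonneg hK₁pos.le h2a.le)
          have hrefl : ∑ i ∈ Finset.range (m+1), ((1/2:ℝ)^a)^(m - i)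
              = ∑ i ∈ Finset.range (m+1), ((1/2:ℝ)^a)^i := by
            have := Finset.sum_range_reflect (fun i => ((1/2:ℝ)^a)^i) (m+1)
            simpa [Nat.succ_sub_one] using this
          rw [hrefl]
          calc ∑ i ∈ Finset.range (m+1), ((1/2:ℝ)^a)^i
              ≤ ∑' i : ℕ, ((1/2:ℝ)^a)^i :=
                Summable.sum_le_tsum _ (fun i _ => by positivity)
                  (summable_geometric_of_lt_one hhalfa0 hhalfa)
            _ = (1 - (1/2:ℝ)^a)⁻¹ := tsum_geometric_of_lt_one hhalfa0 hhalfa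
  have hpart2 : (∑' i : ℕ, g (i + (m+1))) * ν r ≤ D * 2 := by
    rw [← tsum_mul_right]
    have hgeo : Summable (fun k : ℕ => D * (1/2:ℝ)^k) :=
      (summable_geometric_of_lt_one (by norm_num) (by norm_num)).mul_left D
    calc (∑' i : ℕ, g (i + (m+1)) * ν r) ≤ ∑' i : ℕ, D * (1/2:ℝ)^i := by
          apply Summable.tsum_le_tsum (fun i => ?_) (hsum_tail.mul_right _) hgeo
          calc g (i+(m+1)) * ν r = ν r * g (i+(m+1)) := mul_comm _ _
            _ ≤ D * (1/2:ℝ)^i := hB i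
      _ = D * ∑' i : ℕ, (1/2:ℝ)^i := tsum_mul_left
      _ = D * (1-(1/2:ℝ))⁻¹ := by
          rw [tsum_geometric_of_lt_one (by norm_num) (by norm_num)]
      _ = D * 2 := by norm_num
  linarith [hpart1, hpart2]
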